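/- Let g ≥ 2, and let R, S be positive divisors of g with (R, g/S) = 1, R ≥ 2, and S ≠ g. Then for any maps α_i : {0,…,g−1} → ℝ and any t ∈ ℝ, the quantity Ψ_i(t,R,S) := g^{−2} Σ_{0≤r<R} φ_{i+1}(g(t+r)/(RS)) Σ_{0≤s<S} φ_i((t+r)/(RS) + s/S) satisfies Ψ_i(t,R,S)² ≤ (2/3)·RS. -/

import Mathlib

set_option maxHeartbeats 1000000

/-- `e(t) = exp(2πit)`. -/
noncomputable def eC (t : ℝ) : ℂ := Complex.exp (2 * (Real.pi : ℂ) * Complex.I * (t : ℂ))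

/-- `φ_i(β) = |Σ_{0≤n<g} e(α_i(n) − βn)|`. -/
noncomputable def phi (g : ℕ) (α : ℕ → ℕ → ℝ) (i : ℕ) (β : ℝ) : ℝ :=
  ‖∑ n ∈ Finset.range g, eC (α i n - β * n)‖

/-- The auxiliary function `Ψ_i(t,R,S)`. -/
noncomputable def Psi (g : ℕ) (α : ℕ → ℕ → ℝ) (i : ℕ) (t : ℝ) (R S : ℕ) : ℝ :=
  ((g : ℝ) ^ 2)⁻¹ * ∑ r ∈ Finset.range R,
    phi g α (i + 1) ((g : ℝ) * (t + r) / (R * S)) *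
      ∑ s ∈ Finset.range S, phi g α i ((t + r) / (R * S) + (s : ℝ) / S)

open Finset



lemma eC_add (s t : ℝ) : eC (s + t) = eC s * eC t := by
  unfold eC; rw [← Complex.exp_add]; push_cast; ring_nf

lemma abs_eC (t : ℝ) : ‖eC t‖ = 1 := by
  have : eC t = Complex.exp ((2 * Real.pi * t : ℝ) * Complex.I) := by
    unfold eC; push_cast; ring_nf
  rw [this, Complex.norm_exp_ofReal_mul_I]

lemma conj_eC (t : ℝ) : (starRingEnd ℂ) (eC t) = eC (-t) := by
  have h : ∀ u : ℝ, eC u = Complex.exp ((2 * Real.pi * u : ℝ) * Complex.I) := by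
    intro u; unfold eC; push_cast; ring_nf
  rw [h, h, ← Complex.exp_conj]
  congr 1
  simp [Complex.ext_iff]

lemma eC_nat_mul (k : ℕ) (t : ℝ) : eC (k * t) = eC t ^ k := by
  unfold eC
  rw [← Complex.exp_nat_mul]
  push_cast; ring_nf

lemma eC_eq_one_iff (x : ℝ) : eC x = 1 ↔ ∃ n : ℤ, x = n := by
  unfold eC
  rw [Complex.exp_eq_one_iff]
  constructor
  · rintro ⟨n, hn⟩
    refine ⟨n, ?_⟩
    have h2 : (2 * (Real.pi:ℂ) * Complex.I) ≠ 0 := by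
      simp [Real.pi_ne_zero, Complex.I_ne_zero]
    have : (2 * (Real.pi:ℂ) * Complex.I) * x = (2 * (Real.pi:ℂ) * Complex.I) * n := by
      rw [hn]; ring
    have := mul_left_cancel₀ h2 this
    exact_mod_cast this
  · rintro ⟨n, rfl⟩
    exact ⟨n, by push_cast; ring⟩



lemma geom_aux (N : ℕ) (z : ℂ) (hz : z ^ N = 1) :
    ∑ k ∈ range N, z ^ k = if z = 1 then (N : ℂ) else 0 := by
  split_ifs with h
  · simp [h]
  · rw [geom_sum_eq h, hz]; simp

lemma parseval (g N c : ℕ) (hN : 0 < N) (hc : Nat.Coprime c N)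
    (α : ℕ → ℕ → ℝ) (i : ℕ) (β : ℝ) :
    ∑ k ∈ range N, (phi g α i (β + (k : ℝ) * c / N)) ^ 2
      ≤ (N : ℝ) * (((range g ×ˢ range g).filter fun p => p.1 % N = p.2 % N).card : ℝ) := by
  classical
  have hNR : (N : ℝ) ≠ 0 := Nat.cast_ne_zero.2 hN.ne'
  set f : ℕ → ℂ := fun k => ∑ n ∈ range g, eC (α i n - (β + (k : ℝ) * c / N) * n) with hf
  -- the condition equivalence
  have hcond : ∀ m n : ℕ, (eC ((c : ℝ) * ((m : ℝ) - n) / N) = 1) ↔ m % N = n % N := by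
    intro m n
    rw [eC_eq_one_iff]
    constructor
    · rintro ⟨j, hj⟩
      have hz : (c : ℤ) * ((m : ℤ) - n) = j * N := by
        have : (c : ℝ) * ((m : ℝ) - n) = j * N := by
          field_simp at hj; linarith [hj]
        exact_mod_cast this
      have hdvd : (N : ℤ) ∣ ((m : ℤ) - n) * c := by
        refine ⟨j, ?_⟩; linarith [hz]
      have hcop : IsCoprime (N : ℤ) (c : ℤ) :=
        Int.isCoprime_iff_gcd_eq_one.mpr (by simpa [Nat.coprime_comm] using hc)
      have hdvd2 : (N : ℤ) ∣ (m : ℤ) - n := hcop.dvd_of_dvd_mul_right hdvd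
      have : n ≡ m [MOD N] := (Nat.modEq_iff_dvd (n := N)).2 hdvd2
      exact this.symm
    · intro h
      have : m ≡ n [MOD N] := by
        have : n ≡ m [MOD N] := h.symm
        exact this.symm
      obtain ⟨e, he⟩ := (Nat.modEq_iff_dvd (n := N)).1 this.symm
      refine ⟨c * e, ?_⟩
      have heR : (m : ℝ) - n = (N : ℝ) * e := by exact_mod_cast he
      rw [heR]; push_cast; field_simp
  -- expand each term
  have hterm : ∀ k, (starRingEnd ℂ) (f k) * f k
      = ∑ p ∈ range g ×ˢ range g,
          eC (α i p.2 - α i p.1 + β * ((p.1 : ℝ) - p.2))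
            * eC ((c : ℝ) * ((p.1 : ℝ) - p.2) / N) ^ k := by
    intro k
    rw [hf]
    rw [map_sum, Finset.sum_mul_sum, ← Finset.sum_product']
    refine Finset.sum_congr rfl fun p _ => ?_
    rw [conj_eC, ← eC_nat_mul, ← eC_add, ← eC_add]
    congr 1
    field_simp
    ring
  -- sum over k
  have hkey : ((∑ k ∈ range N, (phi g α i (β + (k : ℝ) * c / N)) ^ 2 : ℝ) : ℂ)
      = (N : ℂ) * ∑ p ∈ (range g ×ˢ range g).filter (fun p => p.1 % N = p.2 % N),
          eC (α i p.2 - α i p.1 + β * ((p.1 : ℝ) - p.2)) := by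
    push_cast
    calc (∑ k ∈ range N, ((phi g α i (β + (k : ℝ) * c / N) : ℝ) : ℂ) ^ 2)
        = ∑ k ∈ range N, (starRingEnd ℂ) (f k) * f k := by
          refine Finset.sum_congr rfl fun k _ => ?_
          have : ((phi g α i (β + (k : ℝ) * c / N) : ℝ) : ℂ) ^ 2
              = ((‖f k‖ : ℝ) : ℂ) ^ 2 := by rfl
          rw [this]
          rw [← Complex.normSq_eq_conj_mul_self]
          norm_cast
          rw [← Complex.sq_norm]
      _ = ∑ p ∈ range g ×ˢ range g,
            eC (α i p.2 - α i p.1 + β * ((p.1 : ℝ) - p.2))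
              * ∑ k ∈ range N, eC ((c : ℝ) * ((p.1 : ℝ) - p.2) / N) ^ k := by
          simp_rw [hterm]
          rw [Finset.sum_comm]
          exact Finset.sum_congr rfl fun p _ => by rw [Finset.mul_sum]
      _ = (N : ℂ) * ∑ p ∈ (range g ×ˢ range g).filter (fun p => p.1 % N = p.2 % N),
            eC (α i p.2 - α i p.1 + β * ((p.1 : ℝ) - p.2)) := by
          have hgeom : ∀ p : ℕ × ℕ,
              ∑ k ∈ range N, eC ((c : ℝ) * ((p.1 : ℝ) - p.2) / N) ^ k
                = if p.1 % N = p.2 % N then (N : ℂ) else 0 := by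
            intro p
            have hzN : eC ((c : ℝ) * ((p.1 : ℝ) - p.2) / N) ^ N = 1 := by
              rw [← eC_nat_mul, eC_eq_one_iff]
              refine ⟨(c : ℤ) * ((p.1 : ℤ) - p.2), ?_⟩
              field_simp
              simp
            rw [geom_aux N _ hzN]
            exact if_congr (hcond p.1 p.2) rfl rfl
          simp_rw [hgeom]
          rw [Finset.mul_sum]
          rw [Finset.sum_filter]
          refine Finset.sum_congr rfl fun p _ => ?_
          split_ifs with h <;> simp [mul_comm]
  -- conclude
  have h0 : 0 ≤ ∑ k ∈ range N, (phi g α i (β + (k : ℝ) * c / N)) ^ 2 :=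
    Finset.sum_nonneg fun k _ => sq_nonneg _
  calc ∑ k ∈ range N, (phi g α i (β + (k : ℝ) * c / N)) ^ 2
      = ‖((∑ k ∈ range N, (phi g α i (β + (k : ℝ) * c / N)) ^ 2 : ℝ) : ℂ)‖ := by
        rw [Complex.norm_real, Real.norm_eq_abs, abs_of_nonneg h0]
    _ = ‖(N : ℂ) * ∑ p ∈ (range g ×ˢ range g).filter (fun p => p.1 % N = p.2 % N),
          eC (α i p.2 - α i p.1 + β * ((p.1 : ℝ) - p.2))‖ := by rw [hkey]
    _ ≤ (N : ℝ) * (((range g ×ˢ range g).filter fun p => p.1 % N = p.2 % N).card : ℝ) := by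
        rw [norm_mul, Complex.norm_natCast]
        gcongr
        calc ‖∑ p ∈ (range g ×ˢ range g).filter (fun p => p.1 % N = p.2 % N),
              eC (α i p.2 - α i p.1 + β * ((p.1 : ℝ) - p.2))‖
            ≤ ∑ p ∈ (range g ×ˢ range g).filter (fun p => p.1 % N = p.2 % N),
              ‖eC (α i p.2 - α i p.1 + β * ((p.1 : ℝ) - p.2))‖ :=
              norm_sum_le _ _
          _ = _ := by simp [abs_eC]



lemma count_mod_le (g N m : ℕ) (hN : 0 < N) (hg : 0 < g) :
    ((range g).filter fun n => m % N = n % N).card ≤ (g - 1) / N + 1 := by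
  have : ((range g).filter fun n => m % N = n % N).card
      ≤ (range ((g - 1) / N + 1)).card := by
    apply Finset.card_le_card_of_injOn (fun n => n / N)
    · intro n hn
      simp only [mem_coe, mem_filter, mem_range] at hn ⊢
      have : n ≤ g - 1 := by omega
      exact Nat.lt_succ_of_le (Nat.div_le_div_right this)
    · intro a ha b hb hab
      simp only [coe_filter, Set.mem_setOf_eq, mem_range] at ha hb
      simp only at hab
      have h : N * (a / N) + a % N = N * (b / N) + b % N := by
        rw [hab, ← ha.2, ← hb.2]
      rw [Nat.div_add_mod, Nat.div_add_mod] at h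
      exact h
  simpa using this

lemma card_pairs_le (g N : ℕ) (hN : 0 < N) (hg : 0 < g) :
    (((range g) ×ˢ (range g)).filter fun p : ℕ × ℕ => p.1 % N = p.2 % N).card
      ≤ g * ((g - 1) / N + 1) := by
  rw [Finset.card_filter, Finset.sum_product]
  calc ∑ m ∈ range g, ∑ n ∈ range g, (if m % N = n % N then 1 else 0)
      ≤ ∑ _m ∈ range g, ((g - 1) / N + 1) := by
        apply Finset.sum_le_sum
        intro m _
        rw [← Finset.card_filter]
        exact count_mod_le g N m hN hg
    _ = g * ((g - 1) / N + 1) := by simp [mul_comm]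

lemma sum_range_mul_reindex {M : Type*} [AddCommMonoid M] (R S : ℕ) (hR : 0 < R) (F : ℕ → M) :
    ∑ r ∈ range R, ∑ s ∈ range S, F (r + R * s) = ∑ k ∈ range (R * S), F k := by
  rw [← Finset.sum_product']
  apply Finset.sum_nbij' (i := fun p : ℕ × ℕ => p.1 + R * p.2) (j := fun k => (k % R, k / R))
  · intro p hp
    simp only [mem_product, mem_range] at hp ⊢
    calc p.1 + R * p.2 < R + R * p.2 := by omega
      _ = R * (p.2 + 1) := by ring
      _ ≤ R * S := Nat.mul_le_mul_left R hp.2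
  · intro k hk
    simp only [mem_range] at hk
    simp only [mem_product, mem_range]
    exact ⟨Nat.mod_lt _ hR, Nat.div_lt_of_lt_mul (by omega : k < R * S)⟩
  · intro p hp
    simp only [mem_product, mem_range] at hp
    have h1 : (p.1 + R * p.2) % R = p.1 := by
      rw [Nat.add_mul_mod_self_left, Nat.mod_eq_of_lt hp.1]
    have h2 : (p.1 + R * p.2) / R = p.2 := by
      rw [Nat.add_mul_div_left _ _ hR, Nat.div_eq_of_lt hp.1, Nat.zero_add]
    simp [h1, h2]
  · intro k hk
    simp [Nat.mod_add_div]
  · intro p hp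
    rfl

lemma div_pred_add_one (g R : ℕ) (hR : 0 < R) (hdvd : R ∣ g) (hg : 0 < g) :
    (g - 1) / R + 1 = g / R := by
  obtain ⟨k, rfl⟩ := hdvd
  have hk : 0 < k := by
    rcases Nat.eq_zero_or_pos k with h | h
    · subst h; simp at hg
    · exact h
  obtain ⟨j, rfl⟩ : ∃ j, k = j + 1 := ⟨k - 1, by omega⟩
  have hms : R * (j + 1) = R * j + R := Nat.mul_succ R j
  have e1 : R * (j + 1) - 1 = R * j + (R - 1) := by omega
  rw [e1, Nat.mul_add_div hR, Nat.div_eq_of_lt (by omega), Nat.mul_div_cancel_left _ hR]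

lemma key_nat_ineq (g R S : ℕ) (hR : R ∣ g) (hS : S ∣ g) (hRS : Nat.Coprime R (g / S))
    (hR2 : 2 ≤ R) (hSg : S ≠ g) (hS1 : 1 ≤ S) (hg : 0 < g) :
    3 * (S * (g / (R * S) + 1)) ≤ 2 * g := by
  set G := g / S with hG
  have hgSG : g = S * G := (Nat.div_mul_cancel hS).symm.trans (by ring)
  have hq : g / (R * S) = G / R := by
    rw [hgSG, show R * S = S * R by ring, Nat.mul_div_mul_left _ _ (by omega : 0 < S)]
  have hG1 : 1 ≤ G := Nat.one_le_div_iff (by omega) |>.mpr (Nat.le_of_dvd hg hS)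
  have hG2 : 2 ≤ G := by
    rcases eq_or_lt_of_le hG1 with h | h
    · exfalso; apply hSg; rw [hgSG, ← h, mul_one]
    · exact h
  have hrho : G % R ≠ 0 := by
    intro h
    have hdvd : R ∣ G := Nat.dvd_of_mod_eq_zero h
    have hR1 : R = 1 := Nat.eq_one_of_dvd_one (hRS ▸ Nat.dvd_gcd dvd_rfl hdvd)
    omega
  have hGq : G = R * (G / R) + G % R := (Nat.div_add_mod G R).symm
  have h2q : 2 * (G / R) ≤ R * (G / R) := Nat.mul_le_mul_right _ hR2
  have hkey : 3 * (G / R + 1) ≤ 2 * G := by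
    rcases Nat.eq_zero_or_pos (G / R) with h | h
    · rw [h] at hGq ⊢
      simp only [Nat.mul_zero, Nat.zero_add] at hGq
      omega
    · omega
  rw [hq, hgSG]
  calc 3 * (S * (G / R + 1)) = S * (3 * (G / R + 1)) := by ring
    _ ≤ S * (2 * G) := Nat.mul_le_mul_left _ hkey
    _ = 2 * (S * G) := by ring

lemma phi_nonneg (g : ℕ) (α : ℕ → ℕ → ℝ) (i : ℕ) (β : ℝ) : 0 ≤ phi g α i β :=
  norm_nonneg _


theorem Psi_bound_S_ne_g (g : ℕ) (hg : 2 ≤ g) (α : ℕ → ℕ → ℝ) (i : ℕ) (t : ℝ)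
    (R S : ℕ) (hR : R ∣ g) (hS : S ∣ g) (hRS : Nat.Coprime R (g / S))
    (hR2 : 2 ≤ R) (hSg : S ≠ g) (hS1 : 1 ≤ S) :
    Psi g α i t R S ^ 2 ≤ (2 / 3 : ℝ) * (R * S) := by
  have hg0 : 0 < g := by omega
  have hR0 : 0 < R := by omega
  have hS0 : 0 < S := hS1
  have hRS0 : 0 < R * S := Nat.mul_pos hR0 hS0
  have hRr : (R : ℝ) ≠ 0 := Nat.cast_ne_zero.2 hR0.ne'
  have hSr : (S : ℝ) ≠ 0 := Nat.cast_ne_zero.2 hS0.ne'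
  have hgr : (g : ℝ) ≠ 0 := Nat.cast_ne_zero.2 hg0.ne'
  set A : ℕ → ℝ := fun r => phi g α (i + 1) ((g : ℝ) * (t + r) / ((R : ℝ) * S)) with hA
  set B : ℕ → ℝ := fun r => ∑ s ∈ range S, phi g α i ((t + r) / ((R : ℝ) * S) + (s : ℝ) / S)
    with hB
  have hPsi : Psi g α i t R S = ((g : ℝ) ^ 2)⁻¹ * ∑ r ∈ range R, A r * B r := rfl
  -- bound on ∑ A²
  have hA2 : ∑ r ∈ range R, (A r) ^ 2 ≤ (g : ℝ) ^ 2 := by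
    have hc : ((g / S : ℕ) : ℝ) = (g : ℝ) / S := Nat.cast_div hS hSr
    have harg : ∀ r : ℕ, (g : ℝ) * (t + r) / ((R : ℝ) * S)
        = (g : ℝ) * t / ((R : ℝ) * S) + (r : ℝ) * ((g / S : ℕ) : ℝ) / R := by
      intro r; rw [hc]; field_simp
    have hp := parseval g R (g / S) hR0 hRS.symm α (i + 1) ((g : ℝ) * t / ((R : ℝ) * S))
    have heq : ∑ r ∈ range R, (A r) ^ 2
        = ∑ k ∈ range R, (phi g α (i + 1)
            ((g : ℝ) * t / ((R : ℝ) * S) + (k : ℝ) * ((g / S : ℕ) : ℝ) / R)) ^ 2 := by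
      refine Finset.sum_congr rfl fun r _ => ?_
      rw [hA]; simp only; rw [harg r]
    rw [heq]
    refine hp.trans ?_
    set cN : ℕ := ((range g ×ˢ range g).filter fun p => p.1 % R = p.2 % R).card with hcN
    have h1 : cN ≤ g * ((g - 1) / R + 1) := card_pairs_le g R hR0 hg0
    have h2 : R * (g * ((g - 1) / R + 1)) = g * g := by
      rw [div_pred_add_one g R hR0 hR hg0]
      calc R * (g * (g / R)) = g * (g / R * R) := by ring
        _ = g * g := by rw [Nat.div_mul_cancel hR]
    have h3 : R * cN ≤ g * g := le_of_le_of_eq (Nat.mul_le_mul_left _ h1) h2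
    calc (R : ℝ) * (cN : ℝ) = ((R * cN : ℕ) : ℝ) := by push_cast; ring
      _ ≤ ((g * g : ℕ) : ℝ) := by exact_mod_cast h3
      _ = (g : ℝ) ^ 2 := by push_cast; ring
  -- bound on ∑ B²
  set K : ℕ := S * (R * S * (g * ((g - 1) / (R * S) + 1))) with hK
  have hB2 : ∑ r ∈ range R, (B r) ^ 2 ≤ (K : ℝ) := by
    set F : ℕ → ℝ := fun k =>
      (phi g α i (t / ((R : ℝ) * S) + (k : ℝ) * ((1 : ℕ) : ℝ) / ((R * S : ℕ) : ℝ))) ^ 2 with hF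
    have hBr : ∀ r : ℕ, (B r) ^ 2
        ≤ (S : ℝ) * ∑ s ∈ range S, (phi g α i ((t + r) / ((R : ℝ) * S) + (s : ℝ) / S)) ^ 2 := by
      intro r
      have := sq_sum_le_card_mul_sum_sq
        (s := range S) (f := fun s : ℕ => phi g α i ((t + r) / ((R : ℝ) * S) + (s : ℝ) / S))
      simpa using this
    have harg : ∀ r s : ℕ, (t + r) / ((R : ℝ) * S) + (s : ℝ) / S
        = t / ((R : ℝ) * S) + ((r + R * s : ℕ) : ℝ) * ((1 : ℕ) : ℝ) / ((R * S : ℕ) : ℝ) := by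
      intro r s; push_cast; field_simp; ring
    calc ∑ r ∈ range R, (B r) ^ 2
        ≤ ∑ r ∈ range R, (S : ℝ) *
            ∑ s ∈ range S, (phi g α i ((t + r) / ((R : ℝ) * S) + (s : ℝ) / S)) ^ 2 :=
          Finset.sum_le_sum fun r _ => hBr r
      _ = (S : ℝ) * ∑ r ∈ range R, ∑ s ∈ range S, F (r + R * s) := by
          rw [← Finset.mul_sum]
          congr 1
          refine Finset.sum_congr rfl fun r _ => Finset.sum_congr rfl fun s _ => ?_
          rw [hF]; simp only; rw [harg r s]
      _ = (S : ℝ) * ∑ k ∈ range (R * S), F k := by rw [sum_range_mul_reindex R S hR0 F]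
      _ ≤ (S : ℝ) * (((R * S : ℕ) : ℝ) *
            ((((range g ×ˢ range g).filter fun p => p.1 % (R * S) = p.2 % (R * S)).card : ℕ) : ℝ)) := by
          apply mul_le_mul_of_nonneg_left _ (by positivity)
          exact parseval g (R * S) 1 hRS0 (Nat.coprime_one_left _) α i (t / ((R : ℝ) * S))
      _ ≤ (K : ℝ) := by
          have h1 := card_pairs_le g (R * S) hRS0 hg0
          have h2 : S * ((R * S) * (((range g ×ˢ range g).filter
              fun p => p.1 % (R * S) = p.2 % (R * S)).card)) ≤ K := by
            rw [hK]
            exact Nat.mul_le_mul_left _ (Nat.mul_le_mul_left _ h1)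
          calc (S : ℝ) * (((R * S : ℕ) : ℝ) * ((((range g ×ˢ range g).filter
                fun p => p.1 % (R * S) = p.2 % (R * S)).card : ℕ) : ℝ))
              = ((S * ((R * S) * (((range g ×ˢ range g).filter
                fun p => p.1 % (R * S) = p.2 % (R * S)).card)) : ℕ) : ℝ) := by push_cast; ring
            _ ≤ (K : ℝ) := by exact_mod_cast h2
  -- Cauchy–Schwarz and conclusion
  have hCS : (∑ r ∈ range R, A r * B r) ^ 2
      ≤ (∑ r ∈ range R, (A r) ^ 2) * ∑ r ∈ range R, (B r) ^ 2 :=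
    Finset.sum_mul_sq_le_sq_mul_sq _ _ _
  have hB2nonneg : 0 ≤ ∑ r ∈ range R, (B r) ^ 2 :=
    Finset.sum_nonneg fun r _ => sq_nonneg _
  have hmain : (∑ r ∈ range R, A r * B r) ^ 2 ≤ (g : ℝ) ^ 2 * (K : ℝ) := by
    refine hCS.trans ?_
    exact mul_le_mul hA2 hB2 hB2nonneg (by positivity)
  have hKfin : 3 * K ≤ 2 * ((R * S) * (g * g)) := by
    have h1 : (g - 1) / (R * S) + 1 ≤ g / (R * S) + 1 :=
      Nat.add_le_add_right (Nat.div_le_div_right (by omega)) 1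
    calc 3 * K = (R * S) * g * (3 * (S * ((g - 1) / (R * S) + 1))) := by rw [hK]; ring
      _ ≤ (R * S) * g * (3 * (S * (g / (R * S) + 1))) := by
          apply Nat.mul_le_mul_left
          apply Nat.mul_le_mul_left
          exact Nat.mul_le_mul_left _ h1
      _ ≤ (R * S) * g * (2 * g) := Nat.mul_le_mul_left _
          (key_nat_ineq g R S hR hS hRS hR2 hSg hS1 hg0)
      _ = 2 * ((R * S) * (g * g)) := by ring
  rw [hPsi, mul_pow]
  calc ((g : ℝ) ^ 2)⁻¹ ^ 2 * (∑ r ∈ range R, A r * B r) ^ 2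
      ≤ ((g : ℝ) ^ 2)⁻¹ ^ 2 * ((g : ℝ) ^ 2 * (K : ℝ)) :=
        mul_le_mul_of_nonneg_left hmain (by positivity)
    _ = (K : ℝ) / (g : ℝ) ^ 2 := by field_simp
    _ ≤ (2 / 3 : ℝ) * (R * S) := by
        rw [div_le_iff₀ (by positivity)]
        have hKr : ((3 * K : ℕ) : ℝ) ≤ ((2 * ((R * S) * (g * g)) : ℕ) : ℝ) := by
          exact_mod_cast hKfin
        push_cast at hKr
        nlinarith [hKr]
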